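/- arXiv:1907.11633 — 2 statements merged into one kernel-verified Lean document; each statement's English description precedes it below -/
import Mathlib

section
/- For every ε > 0 and x ∈ ℝ with x ≠ 0, the conjugate Poisson kernel satisfies Q_ε(x) = (1/π) ∫_0^∞ (1/x) 𝟙_{{|x| > εy}} · (2y/(1+y²)²) dy. Consequently, for f ∈ 𝒮(ℝ) ⊗ X and x ∈ ℝ, Q_ε f(x) = ∫_0^∞ H_{εy} f(x) · (2y/(1+y²)²) dy. -/
open MeasureTheory Filter Topology
open scoped ENNReal

noncomputable section

/-- q-variation seminorm over an index set `Z ⊆ ℝ`. -/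
def vqVar {X : Type*} [NormedAddCommGroup X] (q : ℝ) (Z : Set ℝ) (a : ℝ → X) : ℝ≥0∞ :=
  ⨆ (J : ℕ) (t : ℕ → ℝ) (_ : StrictMonoOn t (Set.Iic J)) (_ : ∀ j ≤ J, t j ∈ Z),
    (∑ j ∈ Finset.range J, ((‖a (t (j + 1)) - a (t j)‖₊ : ℝ≥0∞)) ^ q) ^ (1 / q)

/-- q-variation seminorm of an ℕ-indexed family. -/
def vqVarNat {X : Type*} [NormedAddCommGroup X] (q : ℝ) (a : ℕ → X) : ℝ≥0∞ :=
  ⨆ (J : ℕ) (t : ℕ → ℕ) (_ : StrictMonoOn t (Set.Iic J)),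
    (∑ j ∈ Finset.range J, ((‖a (t (j + 1)) - a (t j)‖₊ : ℝ≥0∞)) ^ q) ^ (1 / q)

/-- A Banach space `X` is of martingale cotype `q`. -/
def MartingaleCotype (X : Type*) [NormedAddCommGroup X] [NormedSpace ℝ X] [CompleteSpace X]
    (q : ℝ) : Prop :=
  ∃ C : ℝ, 0 < C ∧
    ∀ (Ω : Type) (mΩ : MeasurableSpace Ω) (μ : Measure Ω), IsProbabilityMeasure μ →
      ∀ (ℱ : Filtration ℕ mΩ) (f : Ω → X), MemLp f (ENNReal.ofReal q) μ →
        (∑' n : ℕ,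
            (eLpNorm (fun ω => MeasureTheory.condExp (ℱ n) μ f ω - (if n = 0 then 0 else MeasureTheory.condExp (ℱ (n - 1)) μ f ω))
              (ENNReal.ofReal q) μ) ^ q)
          ≤ ENNReal.ofReal C * (eLpNorm f (ENNReal.ofReal q) μ) ^ q

/-- A Banach space `X` has the UMD property. -/
def UMDSpace (X : Type*) [NormedAddCommGroup X] [NormedSpace ℝ X] [CompleteSpace X] : Prop :=
  ∀ p : ℝ, 1 < p → ∃ C : ℝ, 0 < C ∧
    ∀ (Ω : Type) (mΩ : MeasurableSpace Ω) (μ : Measure Ω), IsProbabilityMeasure μ →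
      ∀ (ℱ : Filtration ℕ mΩ) (g : ℕ → Ω → X), Martingale g ℱ μ →
        (∀ n, MemLp (g n) (ENNReal.ofReal p) μ) →
        ∀ (N : ℕ) (r : ℕ → ℝ), (∀ n, r n = 1 ∨ r n = -1) →
          eLpNorm (fun ω => ∑ n ∈ Finset.range N, r (n + 1) • (g (n + 1) ω - g n ω))
              (ENNReal.ofReal p) μ
            ≤ ENNReal.ofReal C * eLpNorm (fun ω => g N ω - g 0 ω) (ENNReal.ofReal p) μ

variable {X : Type*} [NormedAddCommGroup X] [NormedSpace ℝ X] [CompleteSpace X]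

/-- Central averaging operator on ℝ. -/
def avgOp (f : ℝ → X) (t : ℝ) (x : ℝ) : X :=
  (1 / (2 * t)) • ∫ y in Set.Ioo (-t) t, f (x - y)

/-- Truncated Hilbert transform. -/
def truncHilbert (f : ℝ → X) (ε : ℝ) (x : ℝ) : X :=
  (Real.pi)⁻¹ • ∫ y in {y : ℝ | ε < |y|}, y⁻¹ • f (x - y)

/-- Doubly truncated Hilbert transform. -/
def truncHilbert2 (f : ℝ → X) (ε R : ℝ) (x : ℝ) : X :=
  (Real.pi)⁻¹ • ∫ y in {y : ℝ | ε < |y| ∧ |y| < R}, y⁻¹ • f (x - y)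

/-- Poisson integral on ℝ: `P_ε f`. -/
def poissonOp (f : ℝ → X) (ε : ℝ) (x : ℝ) : X :=
  ∫ y : ℝ, ((Real.pi)⁻¹ * ε / (ε ^ 2 + (x - y) ^ 2)) • f y

/-- Conjugate Poisson integral on ℝ: `Q_ε f`. -/
def conjPoissonOp (f : ℝ → X) (ε : ℝ) (x : ℝ) : X :=
  ∫ y : ℝ, ((Real.pi)⁻¹ * (x - y) / (ε ^ 2 + (x - y) ^ 2)) • f y

/-- Poisson kernel of the unit disc (real form): `∑_{n∈ℤ} e^{-t|n|} e^{2πinθ}`. -/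
def circPoissonKernel (t θ : ℝ) : ℝ :=
  ∑' n : ℤ, Real.exp (-t * |(n : ℝ)|) * Real.cos (2 * Real.pi * n * θ)

/-- Poisson integral on the circle (parametrized by `[0,1]`). -/
def circPoissonOp (f : ℝ → X) (t : ℝ) (ξ : ℝ) : X :=
  ∫ θ in Set.Ioc (0 : ℝ) 1, circPoissonKernel t (ξ - θ) • f θ

/-- Dilated convolution `Φ_t * f` with a scalar kernel. -/
def dilConv (Φ : ℝ → ℝ) (f : ℝ → X) (t : ℝ) (x : ℝ) : X :=
  ∫ y : ℝ, (t⁻¹ * Φ (y / t)) • f (x - y)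

/-- `f ∈ 𝒮(ℝ) ⊗ X`. -/
def InSchwartzTensor (f : ℝ → X) : Prop :=
  ∃ (n : ℕ) (φ : Fin n → SchwartzMap ℝ ℝ) (b : Fin n → X),
    ∀ x, f x = ∑ k, φ k x • b k

end

lemma key_integral (c : ℝ) (hc : 0 ≤ c) :
    ∫ t in Set.Ioo (0:ℝ) c, 2 * t / (1 + t ^ 2) ^ 2 = c ^ 2 / (1 + c ^ 2) := by
  rw [← MeasureTheory.integral_Ioc_eq_integral_Ioo, ← intervalIntegral.integral_of_le hc]
  have hderiv : ∀ t ∈ Set.uIcc (0:ℝ) c,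
      HasDerivAt (fun t : ℝ => -(1 + t ^ 2)⁻¹) (2 * t / (1 + t ^ 2) ^ 2) t := by
    intro t _
    have h1 : (1 + t ^ 2) ≠ 0 := by positivity
    have h2 : HasDerivAt (fun t : ℝ => 1 + t ^ 2) (2 * t) t := by
      simpa using (hasDerivAt_pow 2 t).const_add 1
    have := (h2.inv h1).neg
    exact this.congr_deriv (by ring)
  have hcont : ContinuousOn (fun t : ℝ => 2 * t / (1 + t ^ 2) ^ 2) (Set.uIcc 0 c) := by
    apply ContinuousOn.div
    · fun_prop
    · fun_prop
    · intro t _; positivity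
  rw [intervalIntegral.integral_eq_sub_of_hasDerivAt hderiv
    (hcont.intervalIntegrable)]
  have h1 : (1 + c ^ 2) ≠ 0 := by positivity
  field_simp
  ring

lemma part1_integral (ε : ℝ) (hε : 0 < ε) (x : ℝ) (hx : x ≠ 0) :
    (∫ y in Set.Ioi (0:ℝ),
        (Set.indicator {y : ℝ | ε * y < |x|} (fun _ => 1 / x) y) * (2 * y / (1 + y ^ 2) ^ 2))
      = x / (ε ^ 2 + x ^ 2) := by
  have hS : MeasurableSet {y : ℝ | ε * y < |x|} :=
    measurableSet_lt (measurable_id.const_mul ε) measurable_const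
  have h1 : ∀ y : ℝ, (Set.indicator {y : ℝ | ε * y < |x|} (fun _ => 1 / x) y) * (2 * y / (1 + y ^ 2) ^ 2)
      = Set.indicator {y : ℝ | ε * y < |x|} (fun y => (1 / x) * (2 * y / (1 + y ^ 2) ^ 2)) y := by
    intro y
    by_cases h : y ∈ {y : ℝ | ε * y < |x|} <;> simp [Set.indicator_apply, h]
  simp_rw [h1]
  rw [MeasureTheory.setIntegral_indicator hS]
  have hset : Set.Ioi (0:ℝ) ∩ {y : ℝ | ε * y < |x|} = Set.Ioo 0 (|x| / ε) := by
    ext y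
    simp only [Set.mem_inter_iff, Set.mem_Ioi, Set.mem_setOf_eq, Set.mem_Ioo]
    constructor
    · rintro ⟨h1, h2⟩; exact ⟨h1, by rwa [lt_div_iff₀ hε, mul_comm]⟩
    · rintro ⟨h1, h2⟩; exact ⟨h1, by rwa [lt_div_iff₀ hε, mul_comm] at h2⟩
  rw [hset, MeasureTheory.integral_const_mul, key_integral _ (by positivity)]
  have h2 : |x| ^ 2 = x ^ 2 := sq_abs x
  have h3 : ε ^ 2 + x ^ 2 ≠ 0 := by positivity
  field_simp
  nlinarith [sq_abs x]

section Aux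
variable {X : Type*} [NormedAddCommGroup X] [NormedSpace ℝ X] [CompleteSpace X]

lemma part2_main (ε : ℝ) (hε : 0 < ε) (f : ℝ → X) (hf : InSchwartzTensor f) (x : ℝ) :
    conjPoissonOp f ε x
      = ∫ y in Set.Ioi (0 : ℝ), (2 * y / (1 + y ^ 2) ^ 2) • truncHilbert f (ε * y) x := by
  obtain ⟨n, φ, b, hfeq⟩ := hf
  have hfc : Continuous f := by
    have h : f = fun x => ∑ k, φ k x • b k := funext hfeq
    rw [h]
    exact continuous_finset_sum _ fun k _ => ((φ k).continuous).smul continuous_const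
  have hfi : Integrable f := by
    have h : f = fun x => ∑ k, φ k x • b k := funext hfeq
    rw [h]
    exact integrable_finset_sum _ fun k _ => ((φ k).integrable).smul_const (b k)
  set g : ℝ → X := fun u => f (x - u) with hg
  have hgc : Continuous g := hfc.comp (continuous_const.sub continuous_id)
  have hgi : Integrable g := hfi.comp_sub_left x
  set I : ℝ := ∫ u : ℝ, ‖g u‖ with hI
  have hInn : 0 ≤ I := integral_nonneg fun u => norm_nonneg _
  set w : ℝ → ℝ := fun t => 2 * t / (1 + t ^ 2) ^ 2 with hw
  set F : ℝ → ℝ → X := fun t u =>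
    Set.indicator {u : ℝ | ε * t < |u|} (fun u => (w t * (Real.pi⁻¹ * u⁻¹)) • g u) u with hF
  have hπ : (0:ℝ) < Real.pi⁻¹ := by positivity
  -- Step A
  have stepA : ∀ t : ℝ, ∫ u : ℝ, F t u = w t • truncHilbert f (ε * t) x := by
    intro t
    have hS : MeasurableSet {u : ℝ | ε * t < |u|} :=
      measurableSet_lt measurable_const measurable_abs
    rw [hF, integral_indicator hS, truncHilbert, smul_smul, ← integral_smul]
    refine integral_congr_ae (Filter.Eventually.of_forall fun u => ?_)
    simp only [hg, smul_smul, mul_assoc]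
  -- norm bound
  set C : ℝ → ℝ := fun t => 2 / (ε * (1 + t ^ 2) ^ 2) * Real.pi⁻¹ with hC
  have hbound : ∀ t : ℝ, 0 < t → ∀ u : ℝ, ‖F t u‖ ≤ C t * ‖g u‖ := by
    intro t ht u
    have hCnn : 0 ≤ C t := by rw [hC]; positivity
    by_cases h : ε * t < |u|
    · have hu0 : (0:ℝ) < ε * t := by positivity
      have hmem : u ∈ {u : ℝ | ε * t < |u|} := h
      rw [hF]
      simp only [Set.indicator_of_mem hmem]
      rw [norm_smul]
      have hwnn : 0 ≤ w t := by rw [hw]; positivity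
      have h1 : |u|⁻¹ ≤ (ε * t)⁻¹ := by
        apply inv_anti₀ hu0 h.le
      have h2 : |w t * (Real.pi⁻¹ * u⁻¹)| = w t * (Real.pi⁻¹ * |u|⁻¹) := by
        rw [abs_mul, abs_of_nonneg hwnn, abs_mul, abs_of_nonneg hπ.le, abs_inv]
      rw [Real.norm_eq_abs, h2]
      have h3 : w t * (Real.pi⁻¹ * |u|⁻¹) ≤ w t * (Real.pi⁻¹ * (ε * t)⁻¹) := by
        apply mul_le_mul_of_nonneg_left _ hwnn
        exact mul_le_mul_of_nonneg_left h1 hπ.le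
      have h4 : w t * (Real.pi⁻¹ * (ε * t)⁻¹) = C t := by
        rw [hw, hC]
        have : (1 + t ^ 2) ^ 2 ≠ 0 := by positivity
        field_simp
      exact mul_le_mul_of_nonneg_right (h4 ▸ h3) (norm_nonneg _)
    · have hmem : u ∉ {u : ℝ | ε * t < |u|} := h
      rw [hF]
      simp only [Set.indicator_of_notMem hmem, norm_zero]
      exact mul_nonneg hCnn (norm_nonneg _)
  -- measurability of uncurry F
  have hSmeas : MeasurableSet {p : ℝ × ℝ | ε * p.1 < |p.2|} :=
    measurableSet_lt (measurable_fst.const_mul ε) measurable_snd.abs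
  have hscal : Measurable fun p : ℝ × ℝ => w p.1 * (Real.pi⁻¹ * p.2⁻¹) := by
    apply Measurable.mul
    · rw [hw]
      exact ((measurable_fst.const_mul 2).div
        (((measurable_fst.pow_const 2).const_add 1).pow_const 2))
    · exact measurable_snd.inv.const_mul _
  have hFmeas : AEStronglyMeasurable (Function.uncurry F)
      ((volume.restrict (Set.Ioi (0:ℝ))).prod volume) := by
    have huncurry : Function.uncurry F = Set.indicator {p : ℝ × ℝ | ε * p.1 < |p.2|}
        (fun p => (w p.1 * (Real.pi⁻¹ * p.2⁻¹)) • g p.2) := by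
      funext p
      rcases p with ⟨t, u⟩
      by_cases h : ε * t < |u| <;>
        simp [Function.uncurry, hF, Set.indicator_apply, h]
    rw [huncurry]
    exact ((hscal.aestronglyMeasurable).smul
      ((hgc.comp continuous_snd).aestronglyMeasurable)).indicator hSmeas
  -- integrability of each slice
  have hFtInt : ∀ t : ℝ, 0 < t → Integrable (F t) := by
    intro t ht
    have hS : MeasurableSet {u : ℝ | ε * t < |u|} :=
      measurableSet_lt measurable_const measurable_abs
    have hm : AEStronglyMeasurable (F t) volume := by
      rw [hF]
      exact (((measurable_inv.const_mul Real.pi⁻¹).const_mul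
        (w t)).aestronglyMeasurable.smul hgc.aestronglyMeasurable).indicator hS
    refine Integrable.mono' ((hgi.norm).const_mul (C t)) hm ?_
    exact Filter.Eventually.of_forall fun u => hbound t ht u
  -- integrability on the product
  have hCIint : Integrable (fun t => C t * I) (volume.restrict (Set.Ioi (0:ℝ))) := by
    have hInt : Integrable (fun t : ℝ => 2 / ε * Real.pi⁻¹ * I * (1 + t ^ 2)⁻¹)
        (volume.restrict (Set.Ioi (0:ℝ))) :=
      ((integrable_inv_one_add_sq.const_mul _)).restrict
    refine Integrable.mono' hInt ?_ ?_
    · apply Continuous.aestronglyMeasurable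
      apply Continuous.mul _ continuous_const
      rw [hC]
      apply Continuous.mul _ continuous_const
      apply continuous_const.div (by fun_prop)
      intro t; positivity
    · refine Filter.Eventually.of_forall fun t => ?_
      have h5 : (0:ℝ) < (1 + t ^ 2) := by positivity
      have h6 : ((1 + t ^ 2) ^ 2)⁻¹ ≤ (1 + t ^ 2)⁻¹ := by
        apply inv_anti₀ h5
        nlinarith
      have h7 : C t * I = 2 / ε * Real.pi⁻¹ * I * ((1 + t ^ 2) ^ 2)⁻¹ := by
        simp only [hC, div_eq_mul_inv, mul_inv]; ring
      have h8 : 0 ≤ C t * I := by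
        rw [hC]; positivity
      rw [Real.norm_eq_abs, abs_of_nonneg h8, h7]
      apply mul_le_mul_of_nonneg_left h6
      positivity
  have hFint : Integrable (Function.uncurry F)
      ((volume.restrict (Set.Ioi (0:ℝ))).prod volume) := by
    refine (integrable_prod_iff hFmeas).2 ⟨?_, ?_⟩
    · filter_upwards [ae_restrict_mem measurableSet_Ioi] with t ht
      exact hFtInt t ht
    · refine Integrable.mono' hCIint (hFmeas.norm.integral_prod_right') ?_
      filter_upwards [ae_restrict_mem measurableSet_Ioi] with t ht
      have h9 : 0 ≤ ∫ u : ℝ, ‖F t u‖ := integral_nonneg fun u => norm_nonneg _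
      simp only [Function.uncurry_apply_pair]
      rw [Real.norm_of_nonneg h9]
      calc (∫ u : ℝ, ‖F t u‖) ≤ ∫ u : ℝ, C t * ‖g u‖ := by
            apply integral_mono_of_nonneg
              (Filter.Eventually.of_forall fun u => norm_nonneg _)
              ((hgi.norm).const_mul (C t))
              (Filter.Eventually.of_forall fun u => hbound t ht u)
        _ = C t * I := by rw [hI, integral_const_mul]
  -- Step D
  have stepD : ∀ᵐ u : ℝ, (Real.pi⁻¹ * u / (ε ^ 2 + u ^ 2)) • g u = ∫ t in Set.Ioi (0:ℝ), F t u := by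
    have hne : ∀ᵐ u : ℝ, u ≠ (0:ℝ) := by
      rw [MeasureTheory.ae_iff]
      have hh : {a : ℝ | ¬ a ≠ 0} = {0} := by ext a; simp
      rw [hh]
      exact measure_singleton 0
    filter_upwards [hne] with u hu
    have habs : 0 < |u| := abs_pos.2 hu
    have hfun : (fun t => F t u)
        = Set.indicator {t : ℝ | ε * t < |u|} (fun t => w t • ((Real.pi⁻¹ * u⁻¹) • g u)) := by
      funext t
      by_cases h : ε * t < |u| <;>
        simp [hF, Set.indicator_apply, h, smul_smul, mul_assoc]
    have hT : MeasurableSet {t : ℝ | ε * t < |u|} :=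
      measurableSet_lt (measurable_id.const_mul ε) measurable_const
    rw [hfun, integral_indicator hT, Measure.restrict_restrict hT]
    have hset : {t : ℝ | ε * t < |u|} ∩ Set.Ioi 0 = Set.Ioo 0 (|u| / ε) := by
      ext t
      simp only [Set.mem_inter_iff, Set.mem_setOf_eq, Set.mem_Ioi, Set.mem_Ioo]
      constructor
      · rintro ⟨h1, h2⟩; exact ⟨h2, by rwa [lt_div_iff₀ hε, mul_comm]⟩
      · rintro ⟨h1, h2⟩; exact ⟨by rwa [lt_div_iff₀ hε, mul_comm] at h2, h1⟩
    rw [hset, integral_smul_const, key_integral _ (by positivity), smul_smul]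
    congr 1
    have h2 : |u| ^ 2 = u ^ 2 := sq_abs u
    have h3 : ε ^ 2 + u ^ 2 ≠ 0 := by positivity
    field_simp
    nlinarith [sq_abs u, Real.pi_ne_zero, sq_nonneg u]
  -- Step E
  have stepE : conjPoissonOp f ε x = ∫ u : ℝ, (Real.pi⁻¹ * u / (ε ^ 2 + u ^ 2)) • g u := by
    rw [conjPoissonOp,
      ← integral_sub_left_eq_self (fun u : ℝ => (Real.pi⁻¹ * u / (ε ^ 2 + u ^ 2)) • g u) volume x]
    congr 1
    funext y
    rw [hg]
    simp
  calc conjPoissonOp f ε x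
      = ∫ u : ℝ, (Real.pi⁻¹ * u / (ε ^ 2 + u ^ 2)) • g u := stepE
    _ = ∫ u : ℝ, ∫ t in Set.Ioi (0:ℝ), F t u := integral_congr_ae stepD
    _ = ∫ t in Set.Ioi (0:ℝ), ∫ u : ℝ, F t u := (integral_integral_swap hFint).symm
    _ = ∫ t in Set.Ioi (0:ℝ), (2 * t / (1 + t ^ 2) ^ 2) • truncHilbert f (ε * t) x :=
        integral_congr_ae (Filter.Eventually.of_forall fun t => stepA t)

end Aux

/-- the integral representation of the conjugate Poisson kernel, and the
resulting representation of `Q_ε f` as an average of truncated Hilbert transforms. -/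
theorem stmt_13 {X : Type*} [NormedAddCommGroup X] [NormedSpace ℝ X] [CompleteSpace X]
    (ε : ℝ) (hε : 0 < ε) :
    (∀ x : ℝ, x ≠ 0 →
      (Real.pi)⁻¹ * x / (ε ^ 2 + x ^ 2)
        = (Real.pi)⁻¹ * ∫ y in Set.Ioi (0 : ℝ),
            (Set.indicator {y : ℝ | ε * y < |x|} (fun _ => 1 / x) y) *
              (2 * y / (1 + y ^ 2) ^ 2)) ∧
    ∀ f : ℝ → X, InSchwartzTensor f → ∀ x : ℝ,
      conjPoissonOp f ε x
        = ∫ y in Set.Ioi (0 : ℝ), (2 * y / (1 + y ^ 2) ^ 2) • truncHilbert f (ε * y) x := by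
  constructor
  · intro x hx
    rw [part1_integral ε hε x hx, mul_div_assoc]
  · intro f hf x
    exact part2_main ε hε f hf x
end

section
/- Let X be a Banach space, 2 ≤ q < ∞, and f ∈ L^p(ℝ; X) for some 1 < p < ∞. Then for every x ∈ ℝ, the pointwise estimate V_q(Q_ε f(x) : ε > 0) ≤ ∫_0^∞ V_q(H_ε f(x) : ε > 0) · (2y/(1+y²)²) dy = V_q(H_ε f(x) : ε > 0) holds (using that ∫_0^∞ 2y/(1+y²)² dy = 1), whenever the truncated Hilbert transforms H_ε f(x) are defined for all ε > 0. -/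
open MeasureTheory Filter Topology
open scoped ENNReal

section Helpers
open Set

variable {X : Type*} [NormedAddCommGroup X] [NormedSpace ℝ X] [CompleteSpace X]


private lemma psi_hasDeriv (u : ℝ) :
    HasDerivAt (fun v : ℝ => -(1 + v ^ 2)⁻¹) (2 * u / (1 + u ^ 2) ^ 2) u := by
  have h1 : (0:ℝ) < 1 + u ^ 2 := by positivity
  have h : HasDerivAt (fun v : ℝ => 1 + v ^ 2) (2 * u) u := by
    simpa using (hasDerivAt_pow 2 u).const_add 1
  have h2 : HasDerivAt (fun v : ℝ => -(1 + v ^ 2)⁻¹) _ u := (h.inv h1.ne').neg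
  convert h2 using 1
  ring

private lemma psi_integrable : Integrable (fun u : ℝ => 2 * u / (1 + u ^ 2) ^ 2) := by
  refine (integrable_inv_one_add_sq.const_mul 2).mono' ?_ ?_
  · apply Measurable.aestronglyMeasurable; fun_prop
  · refine Eventually.of_forall fun u => ?_
    have h1 : (0:ℝ) < 1 + u ^ 2 := by positivity
    rw [Real.norm_eq_abs, abs_div, abs_of_pos (by positivity : (0:ℝ) < (1 + u ^ 2) ^ 2),
      div_le_iff₀ (by positivity)]
    have h2 : |2 * u| = 2 * |u| := by rw [abs_mul]; simp
    rw [h2]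
    have h3 : |u| ^ 2 = u ^ 2 := sq_abs u
    have h4 : (0:ℝ) ≤ |u| := abs_nonneg u
    have h5 : 2 * (1 + u ^ 2)⁻¹ * (1 + u ^ 2) ^ 2 = 2 * (1 + u ^ 2) := by
      field_simp
    rw [h5]
    nlinarith [sq_nonneg (|u| - 1)]

private lemma phi_integrable : Integrable (fun u : ℝ => 2 / (1 + u ^ 2) ^ 2) := by
  refine (integrable_inv_one_add_sq.const_mul 2).mono' ?_ ?_
  · apply Measurable.aestronglyMeasurable; fun_prop
  · refine Eventually.of_forall fun u => ?_
    have h1 : (0:ℝ) < 1 + u ^ 2 := by positivity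
    rw [Real.norm_eq_abs, abs_div, abs_of_pos (by positivity : (0:ℝ) < (1 + u ^ 2) ^ 2),
      div_le_iff₀ (by positivity)]
    have h5 : 2 * (1 + u ^ 2)⁻¹ * (1 + u ^ 2) ^ 2 = 2 * (1 + u ^ 2) := by
      field_simp
    rw [abs_two, h5]
    nlinarith [sq_nonneg u, sq_nonneg (u^2)]

private lemma psi_setint {c : ℝ} (hc : 0 < c) :
    ∫ u in Ioo (0:ℝ) c, 2 * u / (1 + u ^ 2) ^ 2 = 1 - (1 + c ^ 2)⁻¹ := by
  rw [← integral_Ioc_eq_integral_Ioo, ← intervalIntegral.integral_of_le hc.le]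
  rw [intervalIntegral.integral_eq_sub_of_hasDerivAt (fun t _ => psi_hasDeriv t)
    (psi_integrable.intervalIntegrable)]
  simp
  ring

private lemma psi_total : ∫ u in Ioi (0:ℝ), 2 * u / (1 + u ^ 2) ^ 2 = 1 := by
  have htend : Tendsto (fun v : ℝ => -(1 + v ^ 2)⁻¹) atTop (nhds 0) := by
    have h1 : Tendsto (fun v : ℝ => 1 + v ^ 2) atTop atTop :=
      tendsto_atTop_add_const_left _ 1 (tendsto_pow_atTop two_ne_zero)
    simpa using (tendsto_inv_atTop_zero.comp h1).neg
  have := integral_Ioi_of_hasDerivAt_of_tendsto' (a := 0) (m := 0)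
    (fun v _ => psi_hasDeriv v) psi_integrable.integrableOn htend
  simpa using this

private lemma rep_lemma (f : ℝ → X) (x : ℝ)
    (hFm : AEStronglyMeasurable (fun y => f (x - y)) volume)
    (hF1 : IntegrableOn (fun y => f (x - y)) (Set.Icc (-1) 1) volume)
    (hF2 : IntegrableOn (fun y : ℝ => y⁻¹ • f (x - y)) {y : ℝ | 1 < |y|} volume)
    {a : ℝ} (ha : 0 < a) :
    Integrable (fun u => (2 * u / (1 + u ^ 2) ^ 2) • truncHilbert f (a * u) x)
      (volume.restrict (Set.Ioi 0)) ∧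
    conjPoissonOp f a x
      = ∫ u in Set.Ioi (0:ℝ), (2 * u / (1 + u ^ 2) ^ 2) • truncHilbert f (a * u) x := by
  set F : ℝ → X := fun y => f (x - y) with hF
  set ψ : ℝ → ℝ := fun u => 2 * u / (1 + u ^ 2) ^ 2 with hψ
  set Φ : ℝ → ℝ → X := fun u y =>
    ({y : ℝ | a * u < |y|}).indicator (fun y => (ψ u * (Real.pi⁻¹ * y⁻¹)) • F y) y with hΦ
  have hψnn : ∀ u : ℝ, 0 < u → 0 ≤ ψ u := by
    intro u hu; simp only [hψ]; positivity
  -- measurability of uncurry Φ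
  have hsetm : ∀ u : ℝ, MeasurableSet {y : ℝ | u < |y|} := fun u =>
    measurableSet_lt measurable_const continuous_abs.measurable
  have hmeas : AEStronglyMeasurable (Function.uncurry Φ)
      ((volume.restrict (Ioi 0)).prod volume) := by
    have hset : MeasurableSet {p : ℝ × ℝ | a * p.1 < |p.2|} :=
      measurableSet_lt (by fun_prop) (by fun_prop)
    have h1 : AEStronglyMeasurable
        (fun p : ℝ × ℝ => (ψ p.1 * (Real.pi⁻¹ * p.2⁻¹)) • F p.2)
        ((volume.restrict (Ioi 0)).prod volume) := by
      refine AEStronglyMeasurable.smul ?_ hFm.comp_snd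
      apply Measurable.aestronglyMeasurable
      simp only [hψ]
      fun_prop
    have heq : Function.uncurry Φ =
        Set.indicator {p : ℝ × ℝ | a * p.1 < |p.2|}
          (fun p => (ψ p.1 * (Real.pi⁻¹ * p.2⁻¹)) • F p.2) := by
      ext ⟨u, y⟩
      simp only [Function.uncurry_apply_pair]
      by_cases h : a * u < |y|
      · rw [Set.indicator_of_mem (show (u, y) ∈ {p : ℝ × ℝ | a * p.1 < |p.2|} from h)]
        exact Set.indicator_of_mem (show y ∈ {y : ℝ | a * u < |y|} from h) _
      · rw [Set.indicator_of_notMem (show (u, y) ∉ {p : ℝ × ℝ | a * p.1 < |p.2|} from h)]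
        exact Set.indicator_of_notMem (show y ∉ {y : ℝ | a * u < |y|} from h) _
    rw [heq]
    exact h1.indicator hset
  -- integrable bound
  set B : ℝ × ℝ → ℝ := fun p =>
    (a⁻¹ * (2 / (1 + p.1 ^ 2) ^ 2)) *
      (Set.indicator (Icc (-1:ℝ) 1) (fun y => Real.pi⁻¹ * ‖F y‖) p.2)
    + (2 * p.1 / (1 + p.1 ^ 2) ^ 2) *
      (Set.indicator {y : ℝ | 1 < |y|} (fun y => Real.pi⁻¹ * ‖y⁻¹ • F y‖) p.2) with hB
  have hBint : Integrable B ((volume.restrict (Ioi 0)).prod volume) := by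
    refine Integrable.add ?_ ?_
    · exact ((phi_integrable.const_mul a⁻¹).restrict).mul_prod
        ((integrable_indicator_iff measurableSet_Icc).mpr (hF1.norm.const_mul _))
    · exact (psi_integrable.restrict).mul_prod
        ((integrable_indicator_iff (hsetm 1)).mpr (hF2.norm.const_mul _))
  have hprodeq : (volume.restrict (Ioi (0:ℝ))).prod (volume : Measure ℝ)
      = (((volume : Measure ℝ)).prod (volume : Measure ℝ)).restrict ((Ioi 0) ×ˢ univ) := by
    rw [← Measure.prod_restrict, Measure.restrict_univ]
  have hae : ∀ᵐ p : ℝ × ℝ ∂((volume.restrict (Ioi 0)).prod volume), 0 < p.1 := by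
    rw [hprodeq]
    filter_upwards [ae_restrict_mem (measurableSet_Ioi.prod MeasurableSet.univ)] with p hp
    exact hp.1
  have hbound : ∀ᵐ p ∂((volume.restrict (Ioi 0)).prod volume),
      ‖Function.uncurry Φ p‖ ≤ B p := by
    filter_upwards [hae] with p hp
    obtain ⟨u, y⟩ := p
    simp only [Function.uncurry] at hp ⊢
    have hπ : (0:ℝ) < Real.pi⁻¹ := by positivity
    by_cases h : a * u < |y|
    · have hy0 : y ≠ 0 := by
        intro h0; rw [h0] at h; simp at h; nlinarith [mul_pos ha hp]
      have hyabs : 0 < |y| := abs_pos.mpr hy0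
      have hΦval : ‖Φ u y‖ = ψ u * (Real.pi⁻¹ * |y|⁻¹) * ‖F y‖ := by
        simp only [hΦ]
        rw [Set.indicator_of_mem (show y ∈ {y : ℝ | a * u < |y|} from h), norm_smul,
          Real.norm_eq_abs, abs_mul, abs_mul,
          abs_of_nonneg (hψnn u hp), abs_of_pos hπ, abs_inv]
      rw [hΦval]
      by_cases hy1 : |y| ≤ 1
      · have hmem : y ∈ Icc (-1:ℝ) 1 := abs_le.mp hy1
        have hnot : y ∉ {y : ℝ | 1 < |y|} := by simp [not_lt.mpr hy1]
        rw [hB]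
        simp only [Set.indicator_of_mem hmem, Set.indicator_of_notMem hnot, mul_zero, add_zero]
        have step1 : ψ u * (Real.pi⁻¹ * |y|⁻¹) * ‖F y‖
            ≤ ψ u * (Real.pi⁻¹ * (a * u)⁻¹) * ‖F y‖ := by
          have h1 : |y|⁻¹ ≤ (a * u)⁻¹ :=
            inv_anti₀ (mul_pos ha hp) h.le
          have := hψnn u hp
          gcongr
        refine step1.trans (le_of_eq ?_)
        have hu0 : u ≠ 0 := hp.ne'
        simp only [hψ]
        field_simp
      · push_neg at hy1
        have hnot : y ∉ Icc (-1:ℝ) 1 := by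
          intro hmem; exact absurd (abs_le.mpr hmem) (not_le.mpr hy1)
        have hmem : y ∈ {y : ℝ | 1 < |y|} := hy1
        rw [hB]
        simp only [Set.indicator_of_mem hmem, Set.indicator_of_notMem hnot, mul_zero, zero_add]
        have : ‖y⁻¹ • F y‖ = |y|⁻¹ * ‖F y‖ := by
          rw [norm_smul, Real.norm_eq_abs, abs_inv]
        rw [this]
        exact le_of_eq (by ring)
    · rw [show Φ u y = 0 from Set.indicator_of_notMem (show y ∉ {y : ℝ | a * u < |y|} from h) _,
        norm_zero]
      rw [hB]
      have h1 : (0:ℝ) ≤ Set.indicator (Icc (-1:ℝ) 1) (fun y => Real.pi⁻¹ * ‖F y‖) y := by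
        apply Set.indicator_nonneg; intro z _; positivity
      have h2 : (0:ℝ) ≤ Set.indicator {y : ℝ | 1 < |y|} (fun y => Real.pi⁻¹ * ‖y⁻¹ • F y‖) y := by
        apply Set.indicator_nonneg; intro z _; positivity
      have h3 : (0:ℝ) ≤ a⁻¹ * (2 / (1 + u ^ 2) ^ 2) := by positivity
      have h4 : (0:ℝ) ≤ 2 * u / (1 + u ^ 2) ^ 2 := hψnn u hp
      positivity
  have hΦint : Integrable (Function.uncurry Φ) ((volume.restrict (Ioi 0)).prod volume) :=
    hBint.mono' hmeas hbound
  -- inner integral in y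
  have hinner_y : ∀ u : ℝ, (∫ y, Φ u y) = ψ u • truncHilbert f (a * u) x := by
    intro u
    have : (∫ y, Φ u y) = ∫ y in {y : ℝ | a * u < |y|}, (ψ u * (Real.pi⁻¹ * y⁻¹)) • F y :=
      integral_indicator (hsetm (a * u))
    rw [this, truncHilbert]
    simp_rw [mul_smul]
    rw [integral_smul, integral_smul]
  -- inner integral in u
  have hinner_u : ∀ y : ℝ, y ≠ 0 →
      (∫ u in Ioi (0:ℝ), Φ u y) = (Real.pi⁻¹ * y / (a ^ 2 + y ^ 2)) • F y := by
    intro y hy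
    have hyabs : 0 < |y| := abs_pos.mpr hy
    have hr : 0 < |y| / a := div_pos hyabs ha
    have heq : (fun u => Φ u y)
        = fun u => (Iio (|y| / a)).indicator (fun u => ψ u • ((Real.pi⁻¹ * y⁻¹) • F y)) u := by
      ext u
      by_cases h : a * u < |y|
      · have hu : u ∈ Iio (|y| / a) := by
          rw [mem_Iio, lt_div_iff₀ ha]; linarith [mul_comm a u]
        rw [Set.indicator_of_mem hu]
        simp only [hΦ]
        rw [Set.indicator_of_mem (show y ∈ {y : ℝ | a * u < |y|} from h), mul_smul]
      · have hu : u ∉ Iio (|y| / a) := by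
          rw [mem_Iio, lt_div_iff₀ ha]; intro hc; exact h (by linarith [mul_comm a u])
        rw [Set.indicator_of_notMem hu]
        simp only [hΦ]
        rw [Set.indicator_of_notMem (show y ∉ {y : ℝ | a * u < |y|} from h)]
    rw [heq, integral_indicator measurableSet_Iio,
      Measure.restrict_restrict measurableSet_Iio]
    have hio : Iio (|y| / a) ∩ Ioi 0 = Ioo 0 (|y| / a) := by
      rw [Set.inter_comm, Set.Ioi_inter_Iio]
    rw [hio, integral_smul_const, psi_setint hr, smul_smul]
    congr 1
    have hsq : |y| ^ 2 = y ^ 2 := sq_abs y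
    have hden : a ^ 2 + y ^ 2 ≠ 0 := by positivity
    have h1 : 1 + (|y| / a) ^ 2 = (a ^ 2 + y ^ 2) / a ^ 2 := by
      field_simp [hsq]
      rw [hsq]
    rw [h1]
    have ha2 : (a:ℝ) ^ 2 ≠ 0 := by positivity
    field_simp
    ring
  -- assemble
  have hswap := integral_integral_swap (f := Φ) (μ := volume.restrict (Ioi 0)) (ν := volume) hΦint
  have hmarg : Integrable (fun u => ∫ y, Φ u y) (volume.restrict (Ioi 0)) :=
    hΦint.integral_prod_left
  constructor
  · exact hmarg.congr (Eventually.of_forall fun u => hinner_y u)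
  · have hstep1 : conjPoissonOp f a x
        = ∫ y, (Real.pi⁻¹ * y / (a ^ 2 + y ^ 2)) • F y := by
      rw [conjPoissonOp]
      have := integral_sub_left_eq_self
        (fun y => (Real.pi⁻¹ * y / (a ^ 2 + y ^ 2)) • F y) volume x
      rw [← this]
      congr 1
      ext t
      simp only [hF, sub_sub_cancel]
    rw [hstep1]
    have hstep2 : (∫ y, (Real.pi⁻¹ * y / (a ^ 2 + y ^ 2)) • F y)
        = ∫ y, ∫ u in Ioi (0:ℝ), Φ u y := by
      refine integral_congr_ae ?_
      have h0 : ∀ᵐ y : ℝ, y ≠ 0 := by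
        rw [ae_iff]
        have : {y : ℝ | ¬y ≠ 0} = {0} := by ext y; simp
        rw [this]
        exact measure_singleton 0
      filter_upwards [h0] with y hy
      rw [hinner_u y hy]
    rw [hstep2, ← hswap]
    exact setIntegral_congr_fun measurableSet_Ioi fun u _ => hinner_y u

end Helpers

/-- pointwise estimate `V_q(Q_ε f(x) : ε > 0) ≤ V_q(H_ε f(x) : ε > 0)`. -/
theorem stmt_14 {X : Type*} [NormedAddCommGroup X] [NormedSpace ℝ X] [CompleteSpace X]
    (q : ℝ) (hq : 2 ≤ q) (p : ℝ) (hp : 1 < p) (f : ℝ → X)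
    (hf : MemLp f (ENNReal.ofReal p) volume) (x : ℝ)
    (hdef : ∀ ε : ℝ, 0 < ε →
      IntegrableOn (fun y : ℝ => y⁻¹ • f (x - y)) {y : ℝ | ε < |y|} volume) :
    vqVar q (Set.Ioi 0) (fun ε => conjPoissonOp f ε x)
      ≤ vqVar q (Set.Ioi 0) (fun ε => truncHilbert f ε x) := by
  have hq0 : (0:ℝ) < q := by linarith
  -- hypotheses for the representation lemma
  have hmp : MeasurePreserving (fun y : ℝ => x - y) volume volume :=
    Measure.measurePreserving_sub_left volume x
  have hFm : AEStronglyMeasurable (fun y => f (x - y)) volume :=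
    hf.1.comp_measurePreserving hmp
  have hFlp : MemLp (fun y => f (x - y)) (ENNReal.ofReal p) volume :=
    hf.comp_measurePreserving hmp
  have hF1 : IntegrableOn (fun y => f (x - y)) (Set.Icc (-1) 1) volume :=
    (hFlp.locallyIntegrable (ENNReal.one_le_ofReal.mpr hp.le)).integrableOn_isCompact
      isCompact_Icc
  have hF2 : IntegrableOn (fun y : ℝ => y⁻¹ • f (x - y)) {y : ℝ | 1 < |y|} volume :=
    hdef 1 one_pos
  have key : ∀ a : ℝ, 0 < a →
      Integrable (fun u => (2 * u / (1 + u ^ 2) ^ 2) • truncHilbert f (a * u) x)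
        (volume.restrict (Set.Ioi 0)) ∧
      conjPoissonOp f a x
        = ∫ u in Set.Ioi (0:ℝ), (2 * u / (1 + u ^ 2) ^ 2) • truncHilbert f (a * u) x :=
    fun a ha => rep_lemma f x hFm hF1 hF2 ha
  refine iSup_le fun J => iSup_le fun t => iSup_le fun hmono => iSup_le fun hmem => ?_
  set V := vqVar q (Set.Ioi 0) (fun ε => truncHilbert f ε x) with hVdef
  by_cases hV : V = ⊤
  · rw [hV]; exact le_top
  have htpos : ∀ j ≤ J, 0 < t j := fun j hj => hmem j hj
  -- scaled partition bound
  have hEbound : ∀ u : ℝ, 0 < u →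
      (∑ j ∈ Finset.range J,
          ((‖truncHilbert f (t (j + 1) * u) x - truncHilbert f (t j * u) x‖₊ : ℝ≥0∞)) ^ q)
        ^ (1 / q) ≤ V := by
    intro u hu
    have h1 : StrictMonoOn (fun j : ℕ => t j * u) (Set.Iic J) :=
      fun i hi j hj hij => mul_lt_mul_of_pos_right (hmono hi hj hij) hu
    have h2 : ∀ j ≤ J, (fun j : ℕ => t j * u) j ∈ Set.Ioi (0:ℝ) :=
      fun j hj => mul_pos (htpos j hj) hu
    rw [hVdef, vqVar]
    exact le_iSup_of_le J (le_iSup_of_le (fun j : ℕ => t j * u)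
      (le_iSup_of_le h1 (le_iSup_of_le h2 le_rfl)))
  set Vr := V.toReal with hVr
  have hVrnn : 0 ≤ Vr := ENNReal.toReal_nonneg
  -- real version of the partition bound
  have hSbound : ∀ u : ℝ, 0 < u →
      (∑ j ∈ Finset.range J,
          ‖truncHilbert f (t (j + 1) * u) x - truncHilbert f (t j * u) x‖ ^ q) ^ (1 / q)
        ≤ Vr := by
    intro u hu
    have h1 := hEbound u hu
    have hne : ∀ j ∈ Finset.range J,
        ((‖truncHilbert f (t (j + 1) * u) x - truncHilbert f (t j * u) x‖₊ : ℝ≥0∞)) ^ q ≠ ⊤ :=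
      fun j _ => ENNReal.rpow_ne_top_of_nonneg hq0.le ENNReal.coe_ne_top
    have h2 := ENNReal.toReal_mono hV h1
    rw [← ENNReal.toReal_rpow, ENNReal.toReal_sum hne] at h2
    simp only [← ENNReal.toReal_rpow, ENNReal.coe_toReal, coe_nnnorm] at h2
    exact h2
  -- PiLp setup
  set pe := ENNReal.ofReal q with hpe
  haveI hfact : Fact (1 ≤ pe) := ⟨ENNReal.one_le_ofReal.mpr (by linarith)⟩
  have hpet : pe.toReal = q := ENNReal.toReal_ofReal hq0.le
  set G0 : ℝ → (Fin J → X) := fun u j =>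
    (2 * u / (1 + u ^ 2) ^ 2) • truncHilbert f (t ((j : ℕ) + 1) * u) x
      - (2 * u / (1 + u ^ 2) ^ 2) • truncHilbert f (t (j : ℕ) * u) x with hG0
  have hjpos : ∀ j : Fin J, 0 < t (j : ℕ) := fun j => htpos _ (le_of_lt j.isLt)
  have hjpos1 : ∀ j : Fin J, 0 < t ((j : ℕ) + 1) := fun j => htpos _ j.isLt
  have hcoord : ∀ j : Fin J, Integrable (fun u => G0 u j) (volume.restrict (Set.Ioi 0)) :=
    fun j => ((key _ (hjpos1 j)).1).sub ((key _ (hjpos j)).1)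
  have hG0int : Integrable G0 (volume.restrict (Set.Ioi 0)) := by
    have hrw : G0 = fun u => ∑ j : Fin J, Pi.single j (G0 u j) :=
      funext fun u => (Finset.univ_sum_single (G0 u)).symm
    rw [hrw]
    refine integrable_finset_sum _ fun j _ => ?_
    set L : X →L[ℝ] (Fin J → X) :=
      ContinuousLinearMap.pi (fun i : Fin J => if i = j then ContinuousLinearMap.id ℝ X else 0)
      with hL
    refine (L.integrable_comp (hcoord j)).congr (Eventually.of_forall fun u => ?_)
    ext i
    by_cases h : i = j
    · subst h; simp [hL, ContinuousLinearMap.pi_apply, Pi.single_apply]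
    · simp [hL, ContinuousLinearMap.pi_apply, Pi.single_apply, h]
  set e := PiLp.continuousLinearEquiv pe ℝ (fun _ : Fin J => X) with he
  set GE : ℝ → PiLp pe (fun _ : Fin J => X) := fun u => e.symm (G0 u) with hGE
  have hGEcoord : ∀ (u : ℝ) (j : Fin J), GE u j = G0 u j := fun u j => rfl
  have hGEnorm : ∀ u : ℝ, 0 < u → ‖GE u‖ ≤ (2 * u / (1 + u ^ 2) ^ 2) * Vr := by
    intro u hu
    have hψnn : (0:ℝ) ≤ 2 * u / (1 + u ^ 2) ^ 2 := by positivity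
    rw [PiLp.norm_eq_sum (by rw [hpet]; exact hq0), hpet]
    have hterm : ∀ j : Fin J, ‖GE u j‖ ^ q
        = (2 * u / (1 + u ^ 2) ^ 2) ^ q
          * ‖truncHilbert f (t ((j:ℕ) + 1) * u) x - truncHilbert f (t (j:ℕ) * u) x‖ ^ q := by
      intro j
      rw [hGEcoord u j]
      have : G0 u j = (2 * u / (1 + u ^ 2) ^ 2)
          • (truncHilbert f (t ((j:ℕ) + 1) * u) x - truncHilbert f (t (j:ℕ) * u) x) := by
        rw [hG0, smul_sub]
      rw [this, norm_smul, Real.norm_eq_abs, abs_of_nonneg hψnn,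
        Real.mul_rpow hψnn (norm_nonneg _)]
    simp_rw [hterm]
    rw [← Finset.mul_sum]
    rw [Real.mul_rpow (by positivity) (by positivity)]
    have hpow : ((2 * u / (1 + u ^ 2) ^ 2 : ℝ) ^ q) ^ (1/q) = 2 * u / (1 + u ^ 2) ^ 2 := by
      rw [← Real.rpow_mul hψnn, mul_one_div_cancel hq0.ne', Real.rpow_one]
    rw [hpow]
    have hsum : (∑ j : Fin J,
        ‖truncHilbert f (t ((j:ℕ) + 1) * u) x - truncHilbert f (t (j:ℕ) * u) x‖ ^ q)
        = ∑ j ∈ Finset.range J,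
        ‖truncHilbert f (t (j + 1) * u) x - truncHilbert f (t j * u) x‖ ^ q :=
      (Finset.sum_range fun j =>
        ‖truncHilbert f (t (j + 1) * u) x - truncHilbert f (t j * u) x‖ ^ q).symm
    rw [hsum]
    exact mul_le_mul_of_nonneg_left (hSbound u hu) hψnn
  have hGEint : Integrable GE (volume.restrict (Set.Ioi 0)) :=
    e.symm.toContinuousLinearMap.integrable_comp hG0int
  have hbd : Integrable (fun u => (2 * u / (1 + u ^ 2) ^ 2) * Vr) (volume.restrict (Set.Ioi 0)) :=
    psi_integrable.restrict.mul_const Vr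
  have haeb : ∀ᵐ u ∂(volume.restrict (Set.Ioi (0:ℝ))),
      ‖GE u‖ ≤ (2 * u / (1 + u ^ 2) ^ 2) * Vr := by
    filter_upwards [ae_restrict_mem measurableSet_Ioi] with u hu
    exact hGEnorm u hu
  have hnormle : ‖∫ u in Set.Ioi (0:ℝ), GE u‖ ≤ Vr := by
    refine (norm_integral_le_of_norm_le hbd haeb).trans ?_
    rw [MeasureTheory.integral_mul_const, psi_total, one_mul]
  haveI : CompleteSpace (PiLp pe fun _ : Fin J => X) :=
    inferInstance
  have hproj : ∀ j : Fin J, (∫ u in Set.Ioi (0:ℝ), GE u) j = ∫ u in Set.Ioi (0:ℝ), G0 u j := by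
    intro j
    have h := ((ContinuousLinearMap.proj (R := ℝ) (φ := fun _ : Fin J => X) j).comp
        (e.toContinuousLinearMap)).integral_comp_comm hGEint
    simpa [he, hGEcoord] using h.symm
  have hQ : ∀ j : Fin J,
      conjPoissonOp f (t ((j:ℕ) + 1)) x - conjPoissonOp f (t (j:ℕ)) x
        = ∫ u in Set.Ioi (0:ℝ), G0 u j := by
    intro j
    rw [(key _ (hjpos1 j)).2, (key _ (hjpos j)).2,
      ← integral_sub (key _ (hjpos1 j)).1 (key _ (hjpos j)).1]
  -- final chain
  have hreal : (∑ j ∈ Finset.range J,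
      ‖conjPoissonOp f (t (j + 1)) x - conjPoissonOp f (t j) x‖ ^ q) ^ (1/q) ≤ Vr := by
    have hnorm : ‖∫ u in Set.Ioi (0:ℝ), GE u‖
        = (∑ j : Fin J, ‖(∫ u in Set.Ioi (0:ℝ), GE u) j‖ ^ q) ^ (1/q) := by
      rw [PiLp.norm_eq_sum (by rw [hpet]; exact hq0), hpet]
    have heq : (∑ j ∈ Finset.range J,
        ‖conjPoissonOp f (t (j + 1)) x - conjPoissonOp f (t j) x‖ ^ q)
        = ∑ j : Fin J, ‖(∫ u in Set.Ioi (0:ℝ), GE u) j‖ ^ q := by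
      rw [Finset.sum_range (fun j =>
        ‖conjPoissonOp f (t (j + 1)) x - conjPoissonOp f (t j) x‖ ^ q)]
      refine Finset.sum_congr rfl fun j _ => ?_
      rw [hproj j, ← hQ j]
    rw [heq, ← hnorm]
    exact hnormle
  have hofreal : (∑ j ∈ Finset.range J,
      ((‖conjPoissonOp f (t (j + 1)) x - conjPoissonOp f (t j) x‖₊ : ℝ≥0∞)) ^ q) ^ (1/q)
      = ENNReal.ofReal ((∑ j ∈ Finset.range J,
        ‖conjPoissonOp f (t (j + 1)) x - conjPoissonOp f (t j) x‖ ^ q) ^ (1/q)) := by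
    rw [← ENNReal.ofReal_rpow_of_nonneg (Finset.sum_nonneg fun i _ => by positivity)
      (by positivity), ENNReal.ofReal_sum_of_nonneg (fun i _ => by positivity)]
    congr 1
    refine Finset.sum_congr rfl fun j _ => ?_
    rw [← ENNReal.ofReal_rpow_of_nonneg (norm_nonneg _) hq0.le, ofReal_norm, enorm_eq_nnnorm]
  calc (∑ j ∈ Finset.range J,
      ((‖conjPoissonOp f (t (j + 1)) x - conjPoissonOp f (t j) x‖₊ : ℝ≥0∞)) ^ q) ^ (1/q)
      = ENNReal.ofReal ((∑ j ∈ Finset.range J,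
        ‖conjPoissonOp f (t (j + 1)) x - conjPoissonOp f (t j) x‖ ^ q) ^ (1/q)) := hofreal
    _ ≤ ENNReal.ofReal Vr := ENNReal.ofReal_le_ofReal hreal
    _ = V := ENNReal.ofReal_toReal hV
end
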